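/- (L² continuity of the wavetrain bilinear multiplier, Fourier-coefficient formulation.) Let d ≥ 1 be an integer and assume the small divisor hypothesis. Let (u_k)_{k∈ℤ} and (v_k)_{k∈ℤ} be families of measurable functions from ℝ^{d−1} to ℂ with S := ess sup_{y∈ℝ^{d−1}} Σ_{k∈ℤ} (1+k²)^{γ₀+1} |u_k(y)|² < ∞ and V² := ∫_{ℝ^{d−1}} Σ_{k∈ℤ} |v_k(y)|² dy < ∞. Then there exists a constant C > 0, depending only on γ₀ and C₀, such that for almost every y the series Σ_{k₁+k₃=k, k₁·k₃≠0} u_{k₁}(y) v_{k₃}(y)/(k₁δ₁ + k₃δ₃) converges absolutely for every k ∈ ℤ, and ∫_{ℝ^{d−1}} Σ_{k∈ℤ} | Σ_{k₁+k₃=k, k₁·k₃≠0} u_{k₁}(y) v_{k₃}(y)/(k₁δ₁ + k₃δ₃) |² dy ≤ C · S · V². -/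

import Mathlib

open MeasureTheory
open scoped ENNReal NNReal

lemma ennreal_cs (f g : ℤ → ℝ≥0∞) :
    (∑' i, f i * g i) ^ 2 ≤ (∑' i, f i ^ 2) * (∑' i, g i ^ 2) := by
  have hpq : Real.HolderConjugate 2 2 := by constructor <;> norm_num
  have h := ENNReal.lintegral_mul_le_Lp_mul_Lq (Measure.count : Measure ℤ) hpq
    (measurable_of_countable f).aemeasurable (measurable_of_countable g).aemeasurable
  simp only [Pi.mul_apply, lintegral_count, ENNReal.rpow_two] at h
  calc (∑' i, f i * g i) ^ 2
      ≤ ((∑' i, f i ^ 2) ^ (1/2 : ℝ) * (∑' i, g i ^ 2) ^ (1/2 : ℝ)) ^ 2 :=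
        pow_le_pow_left' h 2
    _ = (∑' i, f i ^ 2) * (∑' i, g i ^ 2) := by
        rw [mul_pow, ← ENNReal.rpow_two, ← ENNReal.rpow_two, ← ENNReal.rpow_mul,
          ← ENNReal.rpow_mul]
        norm_num

lemma enorm_tsum_le (f : ℤ → ℂ) :
    (‖∑' i, f i‖₊ : ℝ≥0∞) ≤ ∑' i, (‖f i‖₊ : ℝ≥0∞) := by
  by_cases hf : Summable fun i => ‖f i‖₊
  · rw [← ENNReal.coe_tsum hf]
    exact ENNReal.coe_le_coe.mpr (nnnorm_tsum_le hf)
  · have : (∑' i, (‖f i‖₊ : ℝ≥0∞)) = ⊤ := by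
      by_contra h
      exact hf (ENNReal.tsum_coe_ne_top_iff_summable.mp h)
    simp [this]

lemma K_summable : Summable (fun j : ℤ => 1 / (1 + (j : ℝ) ^ 2)) := by
  have hg : Summable (fun j : ℤ => 1 / (j : ℝ) ^ 2 + if j = 0 then (1:ℝ) else 0) := by
    refine ((Real.summable_one_div_int_pow (p := 2)).mpr one_lt_two).add ?_
    apply summable_of_finite_support
    apply Set.Finite.subset (Set.finite_singleton 0)
    intro j hj
    simp only [Function.mem_support] at hj
    by_contra h
    simp only [Set.mem_singleton_iff] at h
    simp [h] at hj
  refine hg.of_nonneg_of_le (fun j => by positivity) (fun j => ?_)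
  by_cases h : j = 0
  · simp [h]
  · have hj : (1:ℝ) ≤ (j:ℝ)^2 := by
      have : (1:ℤ) ≤ j^2 := by rcases lt_or_gt_of_ne h with h'|h' <;> nlinarith
      exact_mod_cast this
    simp only [h, if_false, add_zero]
    apply one_div_le_one_div_of_le (by positivity)
    linarith

lemma pointwise_bound (δ₁ δ₃ C₀ γ₀ : ℝ) (hC₀ : 0 < C₀) (hγ₀ : 0 ≤ γ₀)
    (hsd : ∀ k₁ k₃ : ℤ, k₁ ≠ 0 → k₃ ≠ 0 →
      (k₁ : ℝ) * δ₁ + (k₃ : ℝ) * δ₃ ≠ 0 ∧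
      1 / |(k₁ : ℝ) * δ₁ + (k₃ : ℝ) * δ₃| ≤ C₀ * (min |(k₁ : ℝ)| |(k₃ : ℝ)|) ^ γ₀)
    (a b : ℤ → ℂ) (k k₁ : ℤ) :
    (‖(if k₁ ≠ 0 ∧ k₁ ≠ k then
        a k₁ * b (k - k₁) / ((((k₁ : ℝ) * δ₁ + ((k - k₁ : ℤ) : ℝ) * δ₃ : ℝ)) : ℂ)
      else 0)‖₊ : ℝ≥0∞) ≤
    (ENNReal.ofReal ((1 + (k₁:ℝ)^2) ^ ((γ₀+1)/2)) * (‖a k₁‖₊ : ℝ≥0∞)) *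
      ((ENNReal.ofReal C₀ * ENNReal.ofReal ((1 + (k₁:ℝ)^2) ^ (-(1:ℝ)/2))) *
        (‖b (k - k₁)‖₊ : ℝ≥0∞)) := by
  by_cases hc : k₁ ≠ 0 ∧ k₁ ≠ k
  case neg => simp [hc]
  obtain ⟨h1, h2⟩ := hc
  have h3 : (k - k₁ : ℤ) ≠ 0 := sub_ne_zero.mpr (Ne.symm h2)
  obtain ⟨hD, hDle⟩ := hsd k₁ (k - k₁) h1 h3
  have hx0 : (0:ℝ) < 1 + (k₁:ℝ)^2 := by positivity
  set x : ℝ := 1 + (k₁:ℝ)^2 with hx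
  set D : ℝ := (k₁ : ℝ) * δ₁ + ((k - k₁ : ℤ) : ℝ) * δ₃ with hDdef
  rw [if_pos ⟨h1, h2⟩]
  have hx1 : (0:ℝ) ≤ x ^ ((γ₀+1)/2) := Real.rpow_nonneg hx0.le _
  have hP : (0:ℝ) ≤ x ^ ((γ₀+1)/2) * ‖a k₁‖ := by positivity
  have hc2 : (0:ℝ) ≤ C₀ * x ^ (-(1:ℝ)/2) := by positivity
  have hre : (ENNReal.ofReal (x ^ ((γ₀+1)/2)) * (‖a k₁‖₊ : ℝ≥0∞)) *
      ((ENNReal.ofReal C₀ * ENNReal.ofReal (x ^ (-(1:ℝ)/2))) * (‖b (k - k₁)‖₊ : ℝ≥0∞))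
      = ENNReal.ofReal ((x ^ ((γ₀+1)/2) * ‖a k₁‖) * ((C₀ * x ^ (-(1:ℝ)/2)) * ‖b (k - k₁)‖)) := by
    rw [ENNReal.ofReal_mul hP, ENNReal.ofReal_mul hx1, ENNReal.ofReal_mul hc2,
      ENNReal.ofReal_mul hC₀.le, ofReal_norm, ofReal_norm, enorm_eq_nnnorm, enorm_eq_nnnorm]
  rw [hre, ← enorm_eq_nnnorm, ← ofReal_norm]
  apply ENNReal.ofReal_le_ofReal
  rw [norm_div, norm_mul]
  have hnD : ‖((D:ℝ) : ℂ)‖ = |D| := by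
    rw [Complex.norm_real, Real.norm_eq_abs]
  rw [hnD]
  have e2 : (min |(k₁:ℝ)| |((k-k₁:ℤ):ℝ)|) ^ γ₀ ≤ x ^ (γ₀/2) := by
    have h4 : |(k₁:ℝ)| ≤ x ^ ((1:ℝ)/2) := by
      rw [← Real.sqrt_eq_rpow, show |(k₁:ℝ)| = Real.sqrt ((k₁:ℝ)^2) by
        rw [Real.sqrt_sq_eq_abs]]
      apply Real.sqrt_le_sqrt; rw [hx]; linarith
    calc (min |(k₁:ℝ)| |((k-k₁:ℤ):ℝ)|) ^ γ₀ ≤ (x ^ ((1:ℝ)/2)) ^ γ₀ :=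
          Real.rpow_le_rpow (le_min (abs_nonneg _) (abs_nonneg _))
            ((min_le_left _ _).trans h4) hγ₀
      _ = x ^ (γ₀/2) := by rw [← Real.rpow_mul hx0.le]; ring_nf
  have e3 : 1/|D| ≤ C₀ * x ^ (γ₀/2) :=
    hDle.trans (mul_le_mul_of_nonneg_left e2 hC₀.le)
  have e1 : x ^ ((γ₀+1)/2) * x ^ (-(1:ℝ)/2) = x ^ (γ₀/2) := by
    rw [← Real.rpow_add hx0]; ring_nf
  have hb : (0:ℝ) ≤ ‖a k₁‖ * ‖b (k-k₁)‖ := by positivity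
  calc ‖a k₁‖ * ‖b (k-k₁)‖ / |D| = ‖a k₁‖ * ‖b (k-k₁)‖ * (1/|D|) := by ring
    _ ≤ ‖a k₁‖ * ‖b (k-k₁)‖ * (C₀ * x ^ (γ₀/2)) := mul_le_mul_of_nonneg_left e3 hb
    _ = x ^ ((γ₀+1)/2) * ‖a k₁‖ * (C₀ * x ^ (-(1:ℝ)/2) * ‖b (k-k₁)‖) := by
        rw [show x ^ (γ₀/2) = x ^ ((γ₀+1)/2) * x ^ (-(1:ℝ)/2) from e1.symm]; ring

theorem stmt4 (d : ℕ) (hd : 1 ≤ d)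
    (δ₁ δ₃ : ℝ) (hδ₁ : δ₁ ≠ 0) (hδ₃ : δ₃ = 1 + δ₁) (hδ₃' : δ₃ ≠ 0)
    (C₀ γ₀ : ℝ) (hC₀ : 0 < C₀) (hγ₀ : 0 ≤ γ₀)
    (hsd : ∀ k₁ k₃ : ℤ, k₁ ≠ 0 → k₃ ≠ 0 →
      (k₁ : ℝ) * δ₁ + (k₃ : ℝ) * δ₃ ≠ 0 ∧
      1 / |(k₁ : ℝ) * δ₁ + (k₃ : ℝ) * δ₃| ≤ C₀ * (min |(k₁ : ℝ)| |(k₃ : ℝ)|) ^ γ₀) :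
    ∃ C > (0 : ℝ),
      ∀ u v : ℤ → EuclideanSpace ℝ (Fin (d - 1)) → ℂ,
        (∀ k, Measurable (u k)) → (∀ k, Measurable (v k)) →
        ∀ S V : ℝ, 0 ≤ S → 0 ≤ V →
        (∀ᵐ y : EuclideanSpace ℝ (Fin (d - 1)) ∂volume,
          (∑' k : ℤ, ENNReal.ofReal ((1 + (k : ℝ) ^ 2) ^ (γ₀ + 1)) * (‖u k y‖₊ : ℝ≥0∞) ^ 2) ≤
            ENNReal.ofReal S) →
        ((∫⁻ y, ∑' k : ℤ, (‖v k y‖₊ : ℝ≥0∞) ^ 2 ∂volume) ≤ ENNReal.ofReal (V ^ 2)) →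
        (∀ᵐ y : EuclideanSpace ℝ (Fin (d - 1)) ∂volume, ∀ k : ℤ,
          Summable (fun k₁ : ℤ =>
            ‖(if k₁ ≠ 0 ∧ k₁ ≠ k then
                u k₁ y * v (k - k₁) y /
                  ((((k₁ : ℝ) * δ₁ + ((k - k₁ : ℤ) : ℝ) * δ₃ : ℝ)) : ℂ)
              else 0)‖)) ∧
        (∫⁻ y, ∑' k : ℤ,
            (‖∑' k₁ : ℤ,
                (if k₁ ≠ 0 ∧ k₁ ≠ k then
                  u k₁ y * v (k - k₁) y /
                    ((((k₁ : ℝ) * δ₁ + ((k - k₁ : ℤ) : ℝ) * δ₃ : ℝ)) : ℂ)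
                else 0)‖₊ : ℝ≥0∞) ^ 2 ∂volume) ≤
          ENNReal.ofReal (C * S * V ^ 2) := by
  classical
  set K : ℝ≥0∞ := ∑' j : ℤ, ENNReal.ofReal (1 / (1 + (j:ℝ)^2)) with hKdef
  have hKne : K ≠ ⊤ := by
    rw [hKdef, ← ENNReal.ofReal_tsum_of_nonneg (fun j => by positivity) K_summable]
    exact ENNReal.ofReal_ne_top
  set Kt : ℝ := K.toReal with hKt
  have hKt0 : 0 ≤ Kt := ENNReal.toReal_nonneg
  refine ⟨C₀^2 * (Kt + 1), by positivity, ?_⟩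
  intro u v hu hv S V hS hV hA hB
  -- the key pointwise (in y) estimate
  have key : ∀ (y : EuclideanSpace ℝ (Fin (d - 1))) (k : ℤ),
      (∑' k₁ : ℤ, (‖(if k₁ ≠ 0 ∧ k₁ ≠ k then
          u k₁ y * v (k - k₁) y /
            ((((k₁ : ℝ) * δ₁ + ((k - k₁ : ℤ) : ℝ) * δ₃ : ℝ)) : ℂ)
        else 0)‖₊ : ℝ≥0∞)) ^ 2 ≤
      (∑' k₁ : ℤ, ENNReal.ofReal ((1 + (k₁ : ℝ) ^ 2) ^ (γ₀ + 1)) * (‖u k₁ y‖₊ : ℝ≥0∞) ^ 2) *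
        (ENNReal.ofReal C₀ ^ 2 *
          ∑' k₁ : ℤ, ENNReal.ofReal (1 / (1 + (k₁:ℝ)^2)) * (‖v (k - k₁) y‖₊ : ℝ≥0∞) ^ 2) := by
    intro y k
    set g : ℤ → ℝ≥0∞ := fun k₁ =>
      ENNReal.ofReal ((1 + (k₁:ℝ)^2) ^ ((γ₀+1)/2)) * (‖u k₁ y‖₊ : ℝ≥0∞) with hg
    set h : ℤ → ℝ≥0∞ := fun k₁ =>
      (ENNReal.ofReal C₀ * ENNReal.ofReal ((1 + (k₁:ℝ)^2) ^ (-(1:ℝ)/2))) *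
        (‖v (k - k₁) y‖₊ : ℝ≥0∞) with hh
    have step1 : (∑' k₁ : ℤ, (‖(if k₁ ≠ 0 ∧ k₁ ≠ k then
          u k₁ y * v (k - k₁) y /
            ((((k₁ : ℝ) * δ₁ + ((k - k₁ : ℤ) : ℝ) * δ₃ : ℝ)) : ℂ)
        else 0)‖₊ : ℝ≥0∞)) ≤ ∑' k₁, g k₁ * h k₁ :=
      ENNReal.tsum_le_tsum fun k₁ =>
        pointwise_bound δ₁ δ₃ C₀ γ₀ hC₀ hγ₀ hsd (fun j => u j y) (fun j => v j y) k k₁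
    have hg2 : (∑' k₁, g k₁ ^ 2) =
        ∑' k₁ : ℤ, ENNReal.ofReal ((1 + (k₁ : ℝ) ^ 2) ^ (γ₀ + 1)) * (‖u k₁ y‖₊ : ℝ≥0∞) ^ 2 := by
      refine tsum_congr fun k₁ => ?_
      have hx0 : (0:ℝ) < 1 + (k₁:ℝ)^2 := by positivity
      rw [hg]
      simp only [mul_pow]
      congr 1
      rw [← ENNReal.ofReal_pow (Real.rpow_nonneg hx0.le _)]
      congr 1
      rw [← Real.rpow_natCast ((1 + (k₁:ℝ)^2) ^ ((γ₀+1)/2)) 2, ← Real.rpow_mul hx0.le]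
      norm_num
    have hh2 : (∑' k₁, h k₁ ^ 2) =
        ENNReal.ofReal C₀ ^ 2 *
          ∑' k₁ : ℤ, ENNReal.ofReal (1 / (1 + (k₁:ℝ)^2)) * (‖v (k - k₁) y‖₊ : ℝ≥0∞) ^ 2 := by
      rw [← ENNReal.tsum_mul_left]
      refine tsum_congr fun k₁ => ?_
      have hx0 : (0:ℝ) < 1 + (k₁:ℝ)^2 := by positivity
      rw [hh]
      simp only [mul_pow]
      have : ENNReal.ofReal ((1 + (k₁:ℝ)^2) ^ (-(1:ℝ)/2)) ^ 2
          = ENNReal.ofReal (1 / (1 + (k₁:ℝ)^2)) := by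
        rw [← ENNReal.ofReal_pow (Real.rpow_nonneg hx0.le _)]
        congr 1
        rw [← Real.rpow_natCast ((1 + (k₁:ℝ)^2) ^ (-(1:ℝ)/2)) 2, ← Real.rpow_mul hx0.le]
        norm_num [Real.rpow_neg_one]
      rw [this]
      ring
    calc (∑' k₁ : ℤ, (‖(if k₁ ≠ 0 ∧ k₁ ≠ k then
          u k₁ y * v (k - k₁) y /
            ((((k₁ : ℝ) * δ₁ + ((k - k₁ : ℤ) : ℝ) * δ₃ : ℝ)) : ℂ)
        else 0)‖₊ : ℝ≥0∞)) ^ 2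
        ≤ (∑' k₁, g k₁ * h k₁) ^ 2 := pow_le_pow_left' step1 2
      _ ≤ (∑' k₁, g k₁ ^ 2) * (∑' k₁, h k₁ ^ 2) := ennreal_cs g h
      _ = _ := by rw [hg2, hh2]
  -- reindexing sums of v
  have hshift : ∀ (y : EuclideanSpace ℝ (Fin (d - 1))) (k₁ : ℤ),
      (∑' k : ℤ, (‖v (k - k₁) y‖₊ : ℝ≥0∞) ^ 2) = ∑' k : ℤ, (‖v k y‖₊ : ℝ≥0∞) ^ 2 :=
    fun y k₁ => Equiv.tsum_eq (Equiv.subRight k₁) (fun k => (‖v k y‖₊ : ℝ≥0∞) ^ 2)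
  have hWsum : ∀ (y : EuclideanSpace ℝ (Fin (d - 1))),
      (∑' k : ℤ, ∑' k₁ : ℤ, ENNReal.ofReal (1 / (1 + (k₁:ℝ)^2)) * (‖v (k - k₁) y‖₊ : ℝ≥0∞) ^ 2)
        = K * ∑' k : ℤ, (‖v k y‖₊ : ℝ≥0∞) ^ 2 := by
    intro y
    rw [ENNReal.tsum_comm]
    calc (∑' k₁ : ℤ, ∑' k : ℤ,
          ENNReal.ofReal (1 / (1 + (k₁:ℝ)^2)) * (‖v (k - k₁) y‖₊ : ℝ≥0∞) ^ 2)
        = ∑' k₁ : ℤ, ENNReal.ofReal (1 / (1 + (k₁:ℝ)^2)) *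
            ∑' k : ℤ, (‖v (k - k₁) y‖₊ : ℝ≥0∞) ^ 2 :=
          tsum_congr fun k₁ => ENNReal.tsum_mul_left
      _ = ∑' k₁ : ℤ, ENNReal.ofReal (1 / (1 + (k₁:ℝ)^2)) *
            ∑' k : ℤ, (‖v k y‖₊ : ℝ≥0∞) ^ 2 :=
          tsum_congr fun k₁ => by rw [hshift y k₁]
      _ = K * ∑' k : ℤ, (‖v k y‖₊ : ℝ≥0∞) ^ 2 := ENNReal.tsum_mul_right
  -- measurability and finiteness of B
  have hBmeas : Measurable (fun y : EuclideanSpace ℝ (Fin (d - 1)) =>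
      ∑' k : ℤ, (‖v k y‖₊ : ℝ≥0∞) ^ 2) :=
    Measurable.ennreal_tsum fun k => ((hv k).nnnorm.coe_nnreal_ennreal).pow_const 2
  have hBfin : ∀ᵐ y : EuclideanSpace ℝ (Fin (d - 1)) ∂volume,
      (∑' k : ℤ, (‖v k y‖₊ : ℝ≥0∞) ^ 2) < ⊤ :=
    ae_lt_top hBmeas (hB.trans_lt ENNReal.ofReal_lt_top).ne
  constructor
  · -- a.e. summability
    filter_upwards [hA, hBfin] with y hAy hBy
    intro k
    have hWB : (∑' k₁ : ℤ, ENNReal.ofReal (1 / (1 + (k₁:ℝ)^2)) * (‖v (k - k₁) y‖₊ : ℝ≥0∞) ^ 2)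
        ≤ ∑' k : ℤ, (‖v k y‖₊ : ℝ≥0∞) ^ 2 := by
      have h1 : (∑' k₁ : ℤ, ENNReal.ofReal (1 / (1 + (k₁:ℝ)^2)) * (‖v (k - k₁) y‖₊ : ℝ≥0∞) ^ 2)
          ≤ ∑' k₁ : ℤ, (‖v (k - k₁) y‖₊ : ℝ≥0∞) ^ 2 := by
        refine ENNReal.tsum_le_tsum fun k₁ => ?_
        have : ENNReal.ofReal (1 / (1 + (k₁:ℝ)^2)) ≤ 1 := by
          apply ENNReal.ofReal_le_one.mpr
          rw [div_le_one (by positivity)]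
          nlinarith [sq_nonneg ((k₁:ℝ))]
        calc ENNReal.ofReal (1 / (1 + (k₁:ℝ)^2)) * (‖v (k - k₁) y‖₊ : ℝ≥0∞) ^ 2
            ≤ 1 * (‖v (k - k₁) y‖₊ : ℝ≥0∞) ^ 2 := mul_le_mul_left this _
          _ = _ := one_mul _
      refine h1.trans (le_of_eq ?_)
      exact Equiv.tsum_eq (Equiv.subLeft k) (fun j => (‖v j y‖₊ : ℝ≥0∞) ^ 2)
    have h2 : (∑' k₁ : ℤ, (‖(if k₁ ≠ 0 ∧ k₁ ≠ k then
          u k₁ y * v (k - k₁) y /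
            ((((k₁ : ℝ) * δ₁ + ((k - k₁ : ℤ) : ℝ) * δ₃ : ℝ)) : ℂ)
        else 0)‖₊ : ℝ≥0∞)) ^ 2
        ≤ ENNReal.ofReal S *
          (ENNReal.ofReal C₀ ^ 2 * ∑' k : ℤ, (‖v k y‖₊ : ℝ≥0∞) ^ 2) :=
      (key y k).trans (mul_le_mul' hAy (mul_le_mul_right hWB _))
    have hfin : ENNReal.ofReal S *
        (ENNReal.ofReal C₀ ^ 2 * ∑' k : ℤ, (‖v k y‖₊ : ℝ≥0∞) ^ 2) ≠ ⊤ :=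
      ENNReal.mul_ne_top ENNReal.ofReal_ne_top
        (ENNReal.mul_ne_top (ENNReal.pow_ne_top ENNReal.ofReal_ne_top) hBy.ne)
    have h3 : (∑' k₁ : ℤ, (‖(if k₁ ≠ 0 ∧ k₁ ≠ k then
          u k₁ y * v (k - k₁) y /
            ((((k₁ : ℝ) * δ₁ + ((k - k₁ : ℤ) : ℝ) * δ₃ : ℝ)) : ℂ)
        else 0)‖₊ : ℝ≥0∞)) ≠ ⊤ := by
      intro htop
      rw [htop] at h2
      have ht : (⊤ : ℝ≥0∞) ^ 2 = ⊤ := by simp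
      rw [ht, top_le_iff] at h2
      exact hfin h2
    have h4 := ENNReal.tsum_coe_ne_top_iff_summable.mp h3
    have h5 := NNReal.summable_coe.mpr h4
    simpa [coe_nnnorm] using h5
  · -- the integral estimate
    have hae : ∀ᵐ y : EuclideanSpace ℝ (Fin (d - 1)) ∂volume,
        (∑' k : ℤ,
          (‖∑' k₁ : ℤ, (if k₁ ≠ 0 ∧ k₁ ≠ k then
              u k₁ y * v (k - k₁) y /
                ((((k₁ : ℝ) * δ₁ + ((k - k₁ : ℤ) : ℝ) * δ₃ : ℝ)) : ℂ)
            else 0)‖₊ : ℝ≥0∞) ^ 2)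
          ≤ (ENNReal.ofReal C₀ ^ 2 * K * ENNReal.ofReal S) *
              ∑' k : ℤ, (‖v k y‖₊ : ℝ≥0∞) ^ 2 := by
      filter_upwards [hA] with y hAy
      have h1 : ∀ k : ℤ,
          (‖∑' k₁ : ℤ, (if k₁ ≠ 0 ∧ k₁ ≠ k then
              u k₁ y * v (k - k₁) y /
                ((((k₁ : ℝ) * δ₁ + ((k - k₁ : ℤ) : ℝ) * δ₃ : ℝ)) : ℂ)
            else 0)‖₊ : ℝ≥0∞) ^ 2
          ≤ (∑' k₁ : ℤ, ENNReal.ofReal ((1 + (k₁ : ℝ) ^ 2) ^ (γ₀ + 1)) * (‖u k₁ y‖₊ : ℝ≥0∞) ^ 2) *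
            (ENNReal.ofReal C₀ ^ 2 *
              ∑' k₁ : ℤ, ENNReal.ofReal (1 / (1 + (k₁:ℝ)^2)) * (‖v (k - k₁) y‖₊ : ℝ≥0∞) ^ 2) :=
        fun k => (pow_le_pow_left' (enorm_tsum_le _) 2).trans (key y k)
      calc (∑' k : ℤ,
            (‖∑' k₁ : ℤ, (if k₁ ≠ 0 ∧ k₁ ≠ k then
                u k₁ y * v (k - k₁) y /
                  ((((k₁ : ℝ) * δ₁ + ((k - k₁ : ℤ) : ℝ) * δ₃ : ℝ)) : ℂ)
              else 0)‖₊ : ℝ≥0∞) ^ 2)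
          ≤ ∑' k : ℤ,
            (∑' k₁ : ℤ, ENNReal.ofReal ((1 + (k₁ : ℝ) ^ 2) ^ (γ₀ + 1)) * (‖u k₁ y‖₊ : ℝ≥0∞) ^ 2) *
              (ENNReal.ofReal C₀ ^ 2 *
                ∑' k₁ : ℤ, ENNReal.ofReal (1 / (1 + (k₁:ℝ)^2)) *
                  (‖v (k - k₁) y‖₊ : ℝ≥0∞) ^ 2) := ENNReal.tsum_le_tsum h1
        _ = (∑' k₁ : ℤ, ENNReal.ofReal ((1 + (k₁ : ℝ) ^ 2) ^ (γ₀ + 1)) * (‖u k₁ y‖₊ : ℝ≥0∞) ^ 2) *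
              (ENNReal.ofReal C₀ ^ 2 *
                ∑' k : ℤ, ∑' k₁ : ℤ, ENNReal.ofReal (1 / (1 + (k₁:ℝ)^2)) *
                  (‖v (k - k₁) y‖₊ : ℝ≥0∞) ^ 2) := by
            rw [ENNReal.tsum_mul_left, ENNReal.tsum_mul_left]
        _ = (∑' k₁ : ℤ, ENNReal.ofReal ((1 + (k₁ : ℝ) ^ 2) ^ (γ₀ + 1)) * (‖u k₁ y‖₊ : ℝ≥0∞) ^ 2) *
              (ENNReal.ofReal C₀ ^ 2 * (K * ∑' k : ℤ, (‖v k y‖₊ : ℝ≥0∞) ^ 2)) := by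
            rw [hWsum y]
        _ ≤ ENNReal.ofReal S *
              (ENNReal.ofReal C₀ ^ 2 * (K * ∑' k : ℤ, (‖v k y‖₊ : ℝ≥0∞) ^ 2)) :=
            mul_le_mul_left hAy _
        _ = (ENNReal.ofReal C₀ ^ 2 * K * ENNReal.ofReal S) *
              ∑' k : ℤ, (‖v k y‖₊ : ℝ≥0∞) ^ 2 := by ring
    have hconst : (ENNReal.ofReal C₀ ^ 2 * K * ENNReal.ofReal S) ≠ ⊤ :=
      ENNReal.mul_ne_top
        (ENNReal.mul_ne_top (ENNReal.pow_ne_top ENNReal.ofReal_ne_top) hKne)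
        ENNReal.ofReal_ne_top
    calc (∫⁻ y, ∑' k : ℤ,
            (‖∑' k₁ : ℤ, (if k₁ ≠ 0 ∧ k₁ ≠ k then
                u k₁ y * v (k - k₁) y /
                  ((((k₁ : ℝ) * δ₁ + ((k - k₁ : ℤ) : ℝ) * δ₃ : ℝ)) : ℂ)
              else 0)‖₊ : ℝ≥0∞) ^ 2 ∂volume)
        ≤ ∫⁻ y, (ENNReal.ofReal C₀ ^ 2 * K * ENNReal.ofReal S) *
            ∑' k : ℤ, (‖v k y‖₊ : ℝ≥0∞) ^ 2 ∂volume := lintegral_mono_ae hae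
      _ = (ENNReal.ofReal C₀ ^ 2 * K * ENNReal.ofReal S) *
            ∫⁻ y, ∑' k : ℤ, (‖v k y‖₊ : ℝ≥0∞) ^ 2 ∂volume :=
          lintegral_const_mul' _ _ hconst
      _ ≤ (ENNReal.ofReal C₀ ^ 2 * K * ENNReal.ofReal S) * ENNReal.ofReal (V ^ 2) :=
          mul_le_mul_right hB _
      _ ≤ ENNReal.ofReal (C₀^2 * (Kt + 1) * S * V ^ 2) := by
          have hKle : K ≤ ENNReal.ofReal (Kt + 1) := by
            conv_lhs => rw [← ENNReal.ofReal_toReal hKne]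
            exact ENNReal.ofReal_le_ofReal (by rw [hKt]; linarith)
          have hc2 : ENNReal.ofReal C₀ ^ 2 = ENNReal.ofReal (C₀ ^ 2) :=
            (ENNReal.ofReal_pow hC₀.le 2).symm
          calc ENNReal.ofReal C₀ ^ 2 * K * ENNReal.ofReal S * ENNReal.ofReal (V ^ 2)
              ≤ ENNReal.ofReal (C₀ ^ 2) * ENNReal.ofReal (Kt + 1) * ENNReal.ofReal S *
                  ENNReal.ofReal (V ^ 2) := by
                rw [hc2]
                exact mul_le_mul_left (mul_le_mul_left (mul_le_mul_right hKle _) _) _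
            _ = ENNReal.ofReal (C₀^2 * (Kt + 1) * S * V ^ 2) := by
                rw [← ENNReal.ofReal_mul (by positivity), ← ENNReal.ofReal_mul (by positivity),
                  ← ENNReal.ofReal_mul (by positivity)]
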